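/- Let r ∈ (1, ∞) and let f : 𝒜 → 𝒜 be a mapping with f(0) = 0. Suppose there exists a function φ : 𝒜 × 𝒜 × 𝒜 → [0, ∞) such that the series Σ_{n=0}^∞ r^{−n} φ(r^n a, r^n b, r^n c) converges for all a, b, c ∈ 𝒜, and ‖r μ f((a+b)/r) + r μ f((a−b)/r) − 2 f(μ a) + f(c c* c) − f(c) c* c − c (f(c))* c − c c* f(c)‖ ≤ φ(a, b, c) for all μ ∈ 𝕋 and all a, b, c ∈ 𝒜. Then there exists a unique J*-derivation D : 𝒜 → 𝒜 such that ‖f(a) − D(a)‖ ≤ (1/2) Σ_{n=1}^∞ r^{−n} φ(r^n a, 0, 0) for all a ∈ 𝒜; moreover D(a) = lim_{n→∞} r^{−n} f(r^n a) for every a ∈ 𝒜. -/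

import Mathlib

set_option maxHeartbeats 4000000


open ContinuousLinearMap Filter

variable {H K : Type*} [NormedAddCommGroup H] [InnerProductSpace ℂ H] [CompleteSpace H]
  [NormedAddCommGroup K] [InnerProductSpace ℂ K] [CompleteSpace K]

/-- `𝒜` is closed under the `J*`-triple product `x ↦ x x* x`. -/
def JStarClosed (𝒜 : Submodule ℂ (H →L[ℂ] K)) : Prop :=
  ∀ x : H →L[ℂ] K, x ∈ 𝒜 → (x ∘L adjoint x) ∘L x ∈ 𝒜

/-- The triple product `c c* c` as an element of `𝒜`. -/
noncomputable def cube (𝒜 : Submodule ℂ (H →L[ℂ] K)) (hA : JStarClosed 𝒜) (c : 𝒜) : 𝒜 :=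
  ⟨((c : H →L[ℂ] K) ∘L adjoint (c : H →L[ℂ] K)) ∘L (c : H →L[ℂ] K), hA c c.2⟩

/-- `D : 𝒜 → 𝒜` is a `J*`-derivation: it is `ℂ`-linear and satisfies
`D(c c* c) = D(c) c* c + c (D(c))* c + c c* D(c)`. -/
noncomputable def IsJStarDerivation (𝒜 : Submodule ℂ (H →L[ℂ] K)) (hA : JStarClosed 𝒜)
    (D : 𝒜 → 𝒜) : Prop :=
  (∀ a b : 𝒜, D (a + b) = D a + D b) ∧
  (∀ (z : ℂ) (a : 𝒜), D (z • a) = z • D a) ∧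
  (∀ c : 𝒜, (D (cube 𝒜 hA c) : H →L[ℂ] K) =
      ((D c : H →L[ℂ] K) ∘L adjoint (c : H →L[ℂ] K)) ∘L (c : H →L[ℂ] K) +
      ((c : H →L[ℂ] K) ∘L adjoint (D c : H →L[ℂ] K)) ∘L (c : H →L[ℂ] K) +
      ((c : H →L[ℂ] K) ∘L adjoint (c : H →L[ℂ] K)) ∘L (D c : H →L[ℂ] K))

/-- The defect of the generalized Jensen functional equation combined with the
`J*`-derivation identity, for a map `f : 𝒜 → 𝒜`, parameter `r` and scalar `μ`. -/
noncomputable def jensenDefect (𝒜 : Submodule ℂ (H →L[ℂ] K)) (hA : JStarClosed 𝒜)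
    (r : ℝ) (f : 𝒜 → 𝒜) (μ : ℂ) (a b c : 𝒜) : H →L[ℂ] K :=
  ((r : ℂ) * μ) • (f ((r : ℂ)⁻¹ • (a + b)) : H →L[ℂ] K) +
  ((r : ℂ) * μ) • (f ((r : ℂ)⁻¹ • (a - b)) : H →L[ℂ] K) -
  (2 : ℂ) • (f (μ • a) : H →L[ℂ] K) +
  (f (cube 𝒜 hA c) : H →L[ℂ] K) -
  ((f c : H →L[ℂ] K) ∘L adjoint (c : H →L[ℂ] K)) ∘L (c : H →L[ℂ] K) -
  ((c : H →L[ℂ] K) ∘L adjoint (f c : H →L[ℂ] K)) ∘L (c : H →L[ℂ] K) -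
  ((c : H →L[ℂ] K) ∘L adjoint (c : H →L[ℂ] K)) ∘L (f c : H →L[ℂ] K)

lemma squeeze_lim {E : Type*} [NormedAddCommGroup E] {x : ℕ → E} {L : E} {e : ℕ → ℝ}
    (hx : Filter.Tendsto x Filter.atTop (nhds L)) (hb : ∀ n, ‖x n‖ ≤ e n)
    (he : Filter.Tendsto e Filter.atTop (nhds 0)) : L = 0 :=
  tendsto_nhds_unique hx (squeeze_zero_norm hb he)

lemma exists_unimodular_sum (t : ℝ) (h : t^2 ≤ 1) :
    ∃ μ₁ μ₂ : ℂ, ‖μ₁‖ = 1 ∧ ‖μ₂‖ = 1 ∧ μ₁ + μ₂ = 2 * (t:ℂ) := by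
  have hs : Real.sqrt (1 - t^2) * Real.sqrt (1 - t^2) = 1 - t^2 :=
    Real.mul_self_sqrt (by linarith)
  refine ⟨⟨t, Real.sqrt (1 - t^2)⟩, ⟨t, -Real.sqrt (1 - t^2)⟩, ?_, ?_, ?_⟩
  · rw [Complex.norm_def, Complex.normSq_mk, hs]
    rw [show t * t + (1 - t^2) = 1 by ring, Real.sqrt_one]
  · rw [Complex.norm_def, Complex.normSq_mk]
    rw [show -Real.sqrt (1 - t^2) * -Real.sqrt (1 - t^2)
      = Real.sqrt (1 - t^2) * Real.sqrt (1 - t^2) by ring, hs]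
    rw [show t * t + (1 - t^2) = 1 by ring, Real.sqrt_one]
  · apply Complex.ext <;> simp <;> ring

lemma subNormSmul (𝒜 : Submodule ℂ (H →L[ℂ] K)) (c : ℂ) (x : 𝒜) : ‖c • x‖ = ‖c‖ * ‖x‖ :=
  norm_smul c (x : H →L[ℂ] K)

noncomputable def gseq {H K : Type*} [NormedAddCommGroup H] [InnerProductSpace ℂ H]
    [NormedAddCommGroup K] [InnerProductSpace ℂ K]
    (𝒜 : Submodule ℂ (H →L[ℂ] K)) (r : ℝ) (f : 𝒜 → 𝒜) (n : ℕ) (a : 𝒜) : 𝒜 :=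
  ((r:ℂ)^n)⁻¹ • f (((r:ℂ)^n) • a)

/-- Theorem 2.2 (stability of `J*`-derivations): if `f(0) = 0`, the series
`Σ r⁻ⁿ φ(rⁿa, rⁿb, rⁿc)` converges and the Jensen/`J*` defect of `f` is controlled by `φ`,
then there is a unique `J*`-derivation `D` with
`‖f(a) − D(a)‖ ≤ (1/2) Σ_{n≥1} r⁻ⁿ φ(rⁿa, 0, 0)`, given by `D(a) = lim r⁻ⁿ f(rⁿa)`. -/
theorem stability_JStarDerivation
    (𝒜 : Submodule ℂ (H →L[ℂ] K)) (hclosed : IsClosed (𝒜 : Set (H →L[ℂ] K)))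
    (hA : JStarClosed 𝒜)
    (r : ℝ) (hr : 1 < r)
    (f : 𝒜 → 𝒜) (hf0 : f 0 = 0)
    (φ : 𝒜 → 𝒜 → 𝒜 → ℝ) (hφ0 : ∀ a b c : 𝒜, 0 ≤ φ a b c)
    (hsum : ∀ a b c : 𝒜, Summable
      (fun n : ℕ => (r ^ n)⁻¹ * φ (((r : ℂ) ^ n) • a) (((r : ℂ) ^ n) • b) (((r : ℂ) ^ n) • c)))
    (hineq : ∀ (μ : ℂ), ‖μ‖ = 1 → ∀ a b c : 𝒜, ‖jensenDefect 𝒜 hA r f μ a b c‖ ≤ φ a b c) :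
    ∃ D : 𝒜 → 𝒜,
      (IsJStarDerivation 𝒜 hA D ∧
        (∀ a : 𝒜, ‖f a - D a‖ ≤
          (1 / 2) * ∑' n : ℕ, (r ^ (n + 1))⁻¹ * φ (((r : ℂ) ^ (n + 1)) • a) 0 0) ∧
        (∀ a : 𝒜, Tendsto (fun n : ℕ => ((r : ℂ) ^ n)⁻¹ • f (((r : ℂ) ^ n) • a))
          atTop (nhds (D a)))) ∧
      (∀ D' : 𝒜 → 𝒜,
        (IsJStarDerivation 𝒜 hA D' ∧
          (∀ a : 𝒜, ‖f a - D' a‖ ≤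
            (1 / 2) * ∑' n : ℕ, (r ^ (n + 1))⁻¹ * φ (((r : ℂ) ^ (n + 1)) • a) 0 0)) → D' = D) := by
  haveI : CompleteSpace 𝒜 := hclosed.completeSpace_coe
  have hr0 : (0:ℝ) < r := lt_trans one_pos hr
  have hrne : (r:ℂ) ≠ 0 := by exact_mod_cast ne_of_gt hr0
  have hnorm : ∀ n : ℕ, ‖((r:ℂ)^n)⁻¹‖ = (r^n)⁻¹ := fun n => by
    rw [norm_inv, norm_pow, Complex.norm_real, Real.norm_of_nonneg hr0.le]
  -- cube of 0
  have hcube0 : cube 𝒜 hA 0 = 0 := by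
    apply Subtype.ext
    simp [cube]
  -- the Jensen part of the inequality (c = 0)
  have hJ : ∀ (μ : ℂ), ‖μ‖ = 1 → ∀ a b : 𝒜,
      ‖((r:ℂ)*μ) • (f ((r:ℂ)⁻¹ • (a+b)) : H →L[ℂ] K) +
        ((r:ℂ)*μ) • (f ((r:ℂ)⁻¹ • (a-b)) : H →L[ℂ] K) -
        (2:ℂ) • (f (μ • a) : H →L[ℂ] K)‖ ≤ φ a b 0 := by
    intro μ hμ a b
    have h := hineq μ hμ a b 0
    unfold jensenDefect at h
    simpa [hcube0, hf0] using h
  -- the derivation part of the inequality (a = b = 0)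
  have hD3 : ∀ c : 𝒜,
      ‖(f (cube 𝒜 hA c) : H →L[ℂ] K) -
        ((f c : H →L[ℂ] K) ∘L adjoint (c : H →L[ℂ] K)) ∘L (c : H →L[ℂ] K) -
        ((c : H →L[ℂ] K) ∘L adjoint (f c : H →L[ℂ] K)) ∘L (c : H →L[ℂ] K) -
        ((c : H →L[ℂ] K) ∘L adjoint (c : H →L[ℂ] K)) ∘L (f c : H →L[ℂ] K)‖ ≤ φ 0 0 c := by
    intro c
    have h := hineq 1 (by simp) 0 0 c
    unfold jensenDefect at h
    simpa [hf0] using h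
  -- ‖r f(a/r) - f a‖ ≤ φ a 0 0 / 2
  have h1 : ∀ a : 𝒜, ‖(r:ℂ) • (f ((r:ℂ)⁻¹ • a) : H →L[ℂ] K) - (f a : H →L[ℂ] K)‖
      ≤ φ a 0 0 / 2 := by
    intro a
    have h := hJ 1 (by simp) a 0
    simp only [add_zero, sub_zero, mul_one, one_smul] at h
    have e : ((r:ℂ)) • (f ((r:ℂ)⁻¹ • a) : H →L[ℂ] K) + (r:ℂ) • (f ((r:ℂ)⁻¹ • a) : H →L[ℂ] K)
        - (2:ℂ) • (f a : H →L[ℂ] K)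
        = (2:ℂ) • ((r:ℂ) • (f ((r:ℂ)⁻¹ • a) : H →L[ℂ] K) - (f a : H →L[ℂ] K)) := by
      module
    rw [e, norm_smul (2:ℂ) ((r:ℂ) • (f ((r:ℂ)⁻¹ • a) : H →L[ℂ] K) - (f a : H →L[ℂ] K))] at h
    simp only [Complex.norm_ofNat] at h
    linarith
  -- ‖f a - r⁻¹ f (r a)‖ ≤ 2⁻¹ r⁻¹ φ (r a) 0 0
  have h2 : ∀ a : 𝒜, ‖(f a : H →L[ℂ] K) - (r:ℂ)⁻¹ • (f ((r:ℂ) • a) : H →L[ℂ] K)‖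
      ≤ 2⁻¹ * (r⁻¹ * φ ((r:ℂ) • a) 0 0) := by
    intro a
    have h := h1 ((r:ℂ) • a)
    rw [smul_smul, inv_mul_cancel₀ hrne, one_smul] at h
    have e : (f a : H →L[ℂ] K) - (r:ℂ)⁻¹ • (f ((r:ℂ) • a) : H →L[ℂ] K)
        = (r:ℂ)⁻¹ • ((r:ℂ) • (f a : H →L[ℂ] K) - (f ((r:ℂ) • a) : H →L[ℂ] K)) := by
      match_scalars <;> field_simp
    rw [e, norm_smul ((r:ℂ)⁻¹) ((r:ℂ) • (f a : H →L[ℂ] K) - (f ((r:ℂ) • a) : H →L[ℂ] K)),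
      norm_inv, Complex.norm_real, Real.norm_of_nonneg hr0.le]
    calc r⁻¹ * ‖(r:ℂ) • (f a : H →L[ℂ] K) - (f ((r:ℂ) • a) : H →L[ℂ] K)‖
        ≤ r⁻¹ * (φ ((r:ℂ) • a) 0 0 / 2) := by
          apply mul_le_mul_of_nonneg_left h (by positivity)
      _ = 2⁻¹ * (r⁻¹ * φ ((r:ℂ) • a) 0 0) := by ring
  -- the approximating sequence and the dominating series
  have hdsum : ∀ a : 𝒜, Summable (fun n : ℕ =>
      2⁻¹ * ((r^(n+1))⁻¹ * φ (((r:ℂ)^(n+1)) • a) 0 0)) := by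
    intro a
    have h := hsum a 0 0
    simp only [smul_zero] at h
    exact (((summable_nat_add_iff 1).2 h)).mul_left _
  have hgdist : ∀ (a : 𝒜) (n : ℕ), dist (gseq 𝒜 r f n a) (gseq 𝒜 r f (n+1) a)
      ≤ 2⁻¹ * ((r^(n+1))⁻¹ * φ (((r:ℂ)^(n+1)) • a) 0 0) := by
    intro a n
    rw [dist_eq_norm]
    have h := h2 (((r:ℂ)^n) • a)
    rw [smul_smul, ← pow_succ'] at h
    have e : gseq 𝒜 r f n a - gseq 𝒜 r f (n+1) a
        = ((r:ℂ)^n)⁻¹ • ((f (((r:ℂ)^n) • a) : 𝒜) - (r:ℂ)⁻¹ • f (((r:ℂ)^(n+1)) • a)) := by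
      unfold gseq
      rw [smul_sub, smul_smul, ← mul_inv, ← pow_succ]
    erw [e, subNormSmul 𝒜 (((r:ℂ)^n)⁻¹) ((f (((r:ℂ)^n) • a) : 𝒜) - (r:ℂ)⁻¹ • f (((r:ℂ)^(n+1)) • a)),
      hnorm]
    have hcoe : ‖(f (((r:ℂ)^n) • a) : 𝒜) - (r:ℂ)⁻¹ • f (((r:ℂ)^(n+1)) • a)‖
        = ‖(f (((r:ℂ)^n) • a) : H →L[ℂ] K) - (r:ℂ)⁻¹ • (f (((r:ℂ)^(n+1)) • a) : H →L[ℂ] K)‖ := rfl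
    rw [hcoe]
    calc (r^n)⁻¹ * ‖(f (((r:ℂ)^n) • a) : H →L[ℂ] K) - (r:ℂ)⁻¹ • (f (((r:ℂ)^(n+1)) • a) : H →L[ℂ] K)‖
        ≤ (r^n)⁻¹ * (2⁻¹ * (r⁻¹ * φ (((r:ℂ)^(n+1)) • a) 0 0)) := by
          apply mul_le_mul_of_nonneg_left h (by positivity)
      _ = 2⁻¹ * ((r^(n+1))⁻¹ * φ (((r:ℂ)^(n+1)) • a) 0 0) := by
          rw [show (r^(n+1))⁻¹ = (r^n)⁻¹ * r⁻¹ by rw [pow_succ, mul_inv]]; ring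
  -- existence of the limit
  have hex : ∀ a : 𝒜, ∃ L : 𝒜, Tendsto (fun n => gseq 𝒜 r f n a) atTop (nhds L) := fun a =>
    cauchySeq_tendsto_of_complete (cauchySeq_of_dist_le_of_summable _ (hgdist a) (hdsum a))
  choose D hD using hex
  -- the error bound
  have hbound : ∀ a : 𝒜, ‖f a - D a‖ ≤
      (1 / 2) * ∑' n : ℕ, (r ^ (n + 1))⁻¹ * φ (((r : ℂ) ^ (n + 1)) • a) 0 0 := by
    intro a
    have h := dist_le_tsum_of_dist_le_of_tendsto₀ _ (hgdist a) (hdsum a) (hD a)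
    have hg0 : gseq 𝒜 r f 0 a = f a := by unfold gseq; simp
    rw [hg0, dist_eq_norm] at h
    calc ‖f a - D a‖ ≤ ∑' n, 2⁻¹ * ((r^(n+1))⁻¹ * φ (((r:ℂ)^(n+1)) • a) 0 0) := h
      _ = (1 / 2) * ∑' n : ℕ, (r ^ (n + 1))⁻¹ * φ (((r : ℂ) ^ (n + 1)) • a) 0 0 := by
          rw [tsum_mul_left]; norm_num
  -- D 0 = 0
  have hD0 : D 0 = 0 := by
    have h0 : ∀ n, gseq 𝒜 r f n (0:𝒜) = 0 := fun n => by unfold gseq; simp [hf0]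
    have ht : Tendsto (fun n => gseq 𝒜 r f n (0:𝒜)) atTop (nhds 0) := by
      simp only [h0]; exact tendsto_const_nhds
    exact tendsto_nhds_unique (hD 0) ht
  -- Jensen identity for D
  have hJen : ∀ a b : 𝒜, D (a+b) + D (a-b) = D a + D a := by
    intro a b
    have hx : Tendsto (fun n => gseq 𝒜 r f n (a+b) + gseq 𝒜 r f n (a-b)
        - (gseq 𝒜 r f (n+1) a + gseq 𝒜 r f (n+1) a)) atTop
        (nhds (D (a+b) + D (a-b) - (D a + D a))) := by
      have h' : Tendsto (fun n => gseq 𝒜 r f (n+1) a) atTop (nhds (D a)) :=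
        (hD a).comp (tendsto_add_atTop_nat 1)
      exact ((hD _).add (hD _)).sub (h'.add h')
    have hb : ∀ n : ℕ, ‖gseq 𝒜 r f n (a+b) + gseq 𝒜 r f n (a-b)
        - (gseq 𝒜 r f (n+1) a + gseq 𝒜 r f (n+1) a)‖
        ≤ (r^(n+1))⁻¹ * φ (((r:ℂ)^(n+1)) • a) (((r:ℂ)^(n+1)) • b) 0 := by
      intro n
      have h := hJ 1 (by simp) (((r:ℂ)^(n+1)) • a) (((r:ℂ)^(n+1)) • b)
      simp only [mul_one, one_smul] at h
      have e1 : (r:ℂ)⁻¹ • (((r:ℂ)^(n+1)) • a + ((r:ℂ)^(n+1)) • b) = ((r:ℂ)^n) • (a+b) := by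
        rw [← smul_add, smul_smul]
        congr 1
        rw [pow_succ']
        exact inv_mul_cancel_left₀ hrne _
      have e2 : (r:ℂ)⁻¹ • (((r:ℂ)^(n+1)) • a - ((r:ℂ)^(n+1)) • b) = ((r:ℂ)^n) • (a-b) := by
        match_scalars <;> (rw [pow_succ]; field_simp)
      rw [e1, e2] at h
      have e : gseq 𝒜 r f n (a+b) + gseq 𝒜 r f n (a-b)
          - (gseq 𝒜 r f (n+1) a + gseq 𝒜 r f (n+1) a)
          = ((r:ℂ)^(n+1))⁻¹ • ((r:ℂ) • (f (((r:ℂ)^n) • (a+b)) : 𝒜)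
            + (r:ℂ) • (f (((r:ℂ)^n) • (a-b)) : 𝒜) - (2:ℂ) • (f (((r:ℂ)^(n+1)) • a) : 𝒜)) := by
        unfold gseq
        match_scalars <;> (try field_simp) <;> (try ring) <;> norm_num
      rw [e]
      have hcoe : ‖((r:ℂ) • (f (((r:ℂ)^n) • (a+b)) : 𝒜)
            + (r:ℂ) • (f (((r:ℂ)^n) • (a-b)) : 𝒜) - (2:ℂ) • (f (((r:ℂ)^(n+1)) • a) : 𝒜))‖
          = ‖((r:ℂ) • (f (((r:ℂ)^n) • (a+b)) : H →L[ℂ] K)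
            + (r:ℂ) • (f (((r:ℂ)^n) • (a-b)) : H →L[ℂ] K)
            - (2:ℂ) • (f (((r:ℂ)^(n+1)) • a) : H →L[ℂ] K))‖ := rfl
      rw [subNormSmul 𝒜 (((r:ℂ)^(n+1))⁻¹) ((r:ℂ) • (f (((r:ℂ)^n) • (a+b)) : 𝒜)
            + (r:ℂ) • (f (((r:ℂ)^n) • (a-b)) : 𝒜) - (2:ℂ) • (f (((r:ℂ)^(n+1)) • a) : 𝒜)),
        hnorm, hcoe]
      exact mul_le_mul_of_nonneg_left h (by positivity)
    have he : Tendsto (fun n : ℕ => (r^(n+1))⁻¹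
        * φ (((r:ℂ)^(n+1)) • a) (((r:ℂ)^(n+1)) • b) 0) atTop (nhds 0) := by
      have h := (hsum a b 0).tendsto_atTop_zero
      simp only [smul_zero] at h
      exact h.comp (tendsto_add_atTop_nat 1)
    exact sub_eq_zero.mp (squeeze_lim hx hb he)
  -- additivity
  have hadd : ∀ u v : 𝒜, D (u + v) = D u + D v := by
    have hdouble : ∀ x : 𝒜, D (x + x) = D x + D x := by
      intro x
      have h := hJen x x
      simpa [hD0] using h
    intro u v
    have h := hJen ((2:ℂ)⁻¹ • (u+v)) ((2:ℂ)⁻¹ • (u-v))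
    have e1 : (2:ℂ)⁻¹ • (u+v) + (2:ℂ)⁻¹ • (u-v) = u := by
      match_scalars <;> norm_num
    have e2 : (2:ℂ)⁻¹ • (u+v) - (2:ℂ)⁻¹ • (u-v) = v := by
      match_scalars <;> norm_num
    rw [e1, e2] at h
    have h2 := hdouble ((2:ℂ)⁻¹ • (u+v))
    have e3 : (2:ℂ)⁻¹ • (u+v) + (2:ℂ)⁻¹ • (u+v) = u + v := by
      match_scalars <;> norm_num
    rw [e3] at h2
    rw [h2]
    exact h.symm
  -- unimodular homogeneity
  have hunit : ∀ (μ : ℂ), ‖μ‖ = 1 → ∀ a : 𝒜, D (μ • a) = μ • D a := by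
    intro μ hμ a
    have hx : Tendsto (fun n => μ • gseq 𝒜 r f n a - gseq 𝒜 r f (n+1) (μ • a)) atTop
        (nhds (μ • D a - D (μ • a))) :=
      ((hD a).const_smul μ).sub ((hD (μ • a)).comp (tendsto_add_atTop_nat 1))
    have hb : ∀ n : ℕ, ‖μ • gseq 𝒜 r f n a - gseq 𝒜 r f (n+1) (μ • a)‖
        ≤ (r^(n+1))⁻¹ * φ (((r:ℂ)^(n+1)) • a) 0 0 := by
      intro n
      have h := hJ μ hμ (((r:ℂ)^(n+1)) • a) 0
      simp only [add_zero, sub_zero] at h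
      have e1 : (r:ℂ)⁻¹ • (((r:ℂ)^(n+1)) • a) = ((r:ℂ)^n) • a := by
        rw [smul_smul]
        congr 1
        rw [pow_succ']
        exact inv_mul_cancel_left₀ hrne _
      have e2 : μ • (((r:ℂ)^(n+1)) • a) = ((r:ℂ)^(n+1)) • (μ • a) := smul_comm _ _ _
      rw [e1, e2] at h
      have e : μ • gseq 𝒜 r f n a - gseq 𝒜 r f (n+1) (μ • a)
          = ((2:ℂ) * ((r:ℂ)^(n+1)))⁻¹ • (((r:ℂ) * μ) • (f (((r:ℂ)^n) • a) : 𝒜)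
            + ((r:ℂ) * μ) • (f (((r:ℂ)^n) • a) : 𝒜)
            - (2:ℂ) • (f (((r:ℂ)^(n+1)) • (μ • a)) : 𝒜)) := by
        unfold gseq
        match_scalars <;> (try field_simp) <;> (try ring) <;> norm_num
      rw [e]
      have hcoe : ‖(((r:ℂ) * μ) • (f (((r:ℂ)^n) • a) : 𝒜)
            + ((r:ℂ) * μ) • (f (((r:ℂ)^n) • a) : 𝒜)
            - (2:ℂ) • (f (((r:ℂ)^(n+1)) • (μ • a)) : 𝒜))‖
          = ‖(((r:ℂ) * μ) • (f (((r:ℂ)^n) • a) : H →L[ℂ] K)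
            + ((r:ℂ) * μ) • (f (((r:ℂ)^n) • a) : H →L[ℂ] K)
            - (2:ℂ) • (f (((r:ℂ)^(n+1)) • (μ • a)) : H →L[ℂ] K))‖ := rfl
      rw [subNormSmul 𝒜 (((2:ℂ) * ((r:ℂ)^(n+1)))⁻¹) (((r:ℂ) * μ) • (f (((r:ℂ)^n) • a) : 𝒜)
            + ((r:ℂ) * μ) • (f (((r:ℂ)^n) • a) : 𝒜)
            - (2:ℂ) • (f (((r:ℂ)^(n+1)) • (μ • a)) : 𝒜)), hcoe]
      have hns : ‖((2:ℂ) * ((r:ℂ)^(n+1)))⁻¹‖ = (2 * r^(n+1))⁻¹ := by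
        rw [norm_inv, norm_mul, Complex.norm_ofNat, norm_pow, Complex.norm_real,
          Real.norm_of_nonneg hr0.le]
      rw [hns]
      calc (2 * r^(n+1))⁻¹ * ‖(((r:ℂ) * μ) • (f (((r:ℂ)^n) • a) : H →L[ℂ] K)
            + ((r:ℂ) * μ) • (f (((r:ℂ)^n) • a) : H →L[ℂ] K)
            - (2:ℂ) • (f (((r:ℂ)^(n+1)) • (μ • a)) : H →L[ℂ] K))‖
          ≤ (2 * r^(n+1))⁻¹ * φ (((r:ℂ)^(n+1)) • a) 0 0 :=
            mul_le_mul_of_nonneg_left h (by positivity)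
        _ ≤ (r^(n+1))⁻¹ * φ (((r:ℂ)^(n+1)) • a) 0 0 := by
            apply mul_le_mul_of_nonneg_right _ (hφ0 _ _ _)
            rw [mul_inv]
            have h1 : (0:ℝ) < (r^(n+1))⁻¹ := by positivity
            nlinarith
    have he : Tendsto (fun n : ℕ => (r^(n+1))⁻¹ * φ (((r:ℂ)^(n+1)) • a) 0 0) atTop (nhds 0) := by
      have h := (hsum a 0 0).tendsto_atTop_zero
      simp only [smul_zero] at h
      exact h.comp (tendsto_add_atTop_nat 1)
    have h0 := squeeze_lim hx hb he
    exact (sub_eq_zero.mp h0).symm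
  -- natural number homogeneity
  have hnsmul : ∀ (n : ℕ) (a : 𝒜), D ((n:ℂ) • a) = (n:ℂ) • D a := by
    intro n a
    induction n with
    | zero => simpa using hD0
    | succ k ih =>
      have : ((k+1:ℕ):ℂ) • a = (k:ℂ) • a + a := by push_cast; rw [add_smul, one_smul]
      rw [this, hadd, ih]
      push_cast
      rw [add_smul, one_smul]
  -- homogeneity for 2⁻¹
  have hhalf : ∀ a : 𝒜, D ((2:ℂ)⁻¹ • a) = (2:ℂ)⁻¹ • D a := by
    intro a
    have h := hadd ((2:ℂ)⁻¹ • a) ((2:ℂ)⁻¹ • a)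
    have e : (2:ℂ)⁻¹ • a + (2:ℂ)⁻¹ • a = a := by match_scalars <;> norm_num
    rw [e] at h
    have : (2:ℂ)⁻¹ • D a = (2:ℂ)⁻¹ • (D ((2:ℂ)⁻¹ • a) + D ((2:ℂ)⁻¹ • a)) := by rw [← h]
    rw [this]
    match_scalars <;> norm_num
  -- real homogeneity
  have hreal : ∀ (t : ℝ) (a : 𝒜), D ((t:ℂ) • a) = (t:ℂ) • D a := by
    intro t a
    obtain ⟨m, hm0, hmt⟩ : ∃ m : ℕ, 0 < (m:ℝ) ∧ |t| ≤ (m:ℝ) := by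
      refine ⟨⌈|t|⌉₊ + 1, by positivity, ?_⟩
      push_cast
      calc |t| ≤ ⌈|t|⌉₊ := Nat.le_ceil _
        _ ≤ (⌈|t|⌉₊ : ℝ) + 1 := by linarith
    have hmne : ((m:ℝ):ℂ) ≠ 0 := by exact_mod_cast ne_of_gt hm0
    have ht1 : (t/m)^2 ≤ 1 := by
      have h1 : |t/m| ≤ 1 := by
        rw [abs_div, abs_of_pos hm0, div_le_one hm0]
        exact hmt
      calc (t/m)^2 = |t/m|^2 := (sq_abs _).symm
        _ ≤ 1^2 := by nlinarith [abs_nonneg (t/m)]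
        _ = 1 := one_pow 2
    obtain ⟨μ₁, μ₂, hμ₁, hμ₂, hμsum⟩ := exists_unimodular_sum (t/m) ht1
    have hcast : ((t/m : ℝ):ℂ) = (t:ℂ) / (m:ℂ) := by push_cast; ring
    rw [hcast] at hμsum
    have hμsum' : (m:ℂ) * (μ₁ + μ₂) = 2 * (t:ℂ) := by
      rw [hμsum]
      field_simp
      exact mul_div_cancel_left₀ _ hmne
    have key : (t:ℂ) • a = ((m:ℕ):ℂ) • ((2:ℂ)⁻¹ • (μ₁ • a + μ₂ • a)) := by
      match_scalars
      push_cast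
      linear_combination (-2⁻¹ : ℂ) * hμsum'
    rw [key, hnsmul m, hhalf, hadd, hunit μ₁ hμ₁, hunit μ₂ hμ₂]
    match_scalars
    push_cast
    linear_combination (2⁻¹ : ℂ) * hμsum'
  -- full complex homogeneity
  have hsmul : ∀ (z : ℂ) (a : 𝒜), D (z • a) = z • D a := by
    intro z a
    have hz : z • a = (z.re:ℂ) • a + (z.im:ℂ) • (Complex.I • a) := by
      match_scalars
      linear_combination (Complex.re_add_im z).symm
    rw [hz, hadd, hreal, hreal, hunit Complex.I (by simp)]
    match_scalars
    linear_combination (Complex.re_add_im z)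
  -- adjoint of scalar multiples
  have hadjs : ∀ (z : ℂ) (x : H →L[ℂ] K), adjoint (z • x) = (starRingEnd ℂ z) • adjoint x :=
    fun z x => LinearIsometryEquiv.map_smulₛₗ adjoint z x
  have hconj : ∀ n : ℕ, (starRingEnd ℂ) ((r:ℂ)^n) = (r:ℂ)^n := fun n => by
    rw [map_pow, Complex.conj_ofReal]
  -- the derivation property
  have hder : ∀ c : 𝒜, (D (cube 𝒜 hA c) : H →L[ℂ] K) =
      ((D c : H →L[ℂ] K) ∘L adjoint (c : H →L[ℂ] K)) ∘L (c : H →L[ℂ] K) +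
      ((c : H →L[ℂ] K) ∘L adjoint (D c : H →L[ℂ] K)) ∘L (c : H →L[ℂ] K) +
      ((c : H →L[ℂ] K) ∘L adjoint (c : H →L[ℂ] K)) ∘L (D c : H →L[ℂ] K) := by
    intro c
    set T : (H →L[ℂ] K) → (H →L[ℂ] K) := fun x =>
      (x ∘L adjoint (c : H →L[ℂ] K)) ∘L (c : H →L[ℂ] K) +
      ((c : H →L[ℂ] K) ∘L adjoint x) ∘L (c : H →L[ℂ] K) +
      ((c : H →L[ℂ] K) ∘L adjoint (c : H →L[ℂ] K)) ∘L x with hT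
    have hTcont : Continuous T := by
      apply Continuous.add
      apply Continuous.add
      · fun_prop
      · have h1 : Continuous fun y : K →L[ℂ] H =>
            (((c : H →L[ℂ] K) ∘L y) ∘L (c : H →L[ℂ] K)) := by fun_prop
        exact h1.comp (ContinuousLinearMap.adjoint (E := H) (F := K) (𝕜 := ℂ)).continuous
      · fun_prop
    have h3n : Tendsto (fun n : ℕ => 3 * n) atTop atTop :=
      tendsto_atTop_atTop.2 fun b => ⟨b, fun n hn => le_trans hn (by omega)⟩
    have hx : Tendsto (fun n => ((gseq 𝒜 r f (3*n) (cube 𝒜 hA c) : 𝒜) : H →L[ℂ] K)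
        - T ((gseq 𝒜 r f n c : 𝒜) : H →L[ℂ] K)) atTop
        (nhds ((D (cube 𝒜 hA c) : H →L[ℂ] K) - T (D c : H →L[ℂ] K))) := by
      apply Tendsto.sub
      · exact (continuous_subtype_val.tendsto _).comp ((hD (cube 𝒜 hA c)).comp h3n)
      · exact (hTcont.tendsto _).comp ((continuous_subtype_val.tendsto _).comp (hD c))
    have hb : ∀ n : ℕ, ‖((gseq 𝒜 r f (3*n) (cube 𝒜 hA c) : 𝒜) : H →L[ℂ] K)
        - T ((gseq 𝒜 r f n c : 𝒜) : H →L[ℂ] K)‖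
        ≤ (r^n)⁻¹ * φ 0 0 (((r:ℂ)^n) • c) := by
      intro n
      have hcs : cube 𝒜 hA (((r:ℂ)^n) • c) = ((r:ℂ)^(3*n)) • cube 𝒜 hA c := by
        apply Subtype.ext
        simp only [cube, Submodule.coe_smul]
        rw [hadjs, hconj]
        simp only [smul_comp, comp_smul, smul_smul, ← pow_add]
        congr 2
        omega
      have h := hD3 (((r:ℂ)^n) • c)
      rw [hcs] at h
      have e : ((gseq 𝒜 r f (3*n) (cube 𝒜 hA c) : 𝒜) : H →L[ℂ] K)
          - T ((gseq 𝒜 r f n c : 𝒜) : H →L[ℂ] K)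
          = ((r:ℂ)^(3*n))⁻¹ • ((f (((r:ℂ)^(3*n)) • cube 𝒜 hA c) : H →L[ℂ] K) -
            ((f (((r:ℂ)^n) • c) : H →L[ℂ] K) ∘L adjoint ((((r:ℂ)^n) • c : 𝒜) : H →L[ℂ] K))
              ∘L ((((r:ℂ)^n) • c : 𝒜) : H →L[ℂ] K) -
            (((((r:ℂ)^n) • c : 𝒜) : H →L[ℂ] K) ∘L adjoint (f (((r:ℂ)^n) • c) : H →L[ℂ] K))
              ∘L ((((r:ℂ)^n) • c : 𝒜) : H →L[ℂ] K) -
            (((((r:ℂ)^n) • c : 𝒜) : H →L[ℂ] K) ∘L adjoint ((((r:ℂ)^n) • c : 𝒜) : H →L[ℂ] K))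
              ∘L (f (((r:ℂ)^n) • c) : H →L[ℂ] K)) := by
        rw [hT]
        unfold gseq
        simp only [Submodule.coe_smul, hadjs, hconj, map_inv₀, smul_comp, comp_smul, smul_sub,
          smul_smul]
        match_scalars <;> (try field_simp) <;> (try ring)
      rw [e]
      refine le_trans (le_of_eq (norm_smul (β := H →L[ℂ] K) (((r:ℂ)^(3*n))⁻¹) _)) ?_
      rw [hnorm]
      refine le_trans (mul_le_mul_of_nonneg_left h (by positivity)) ?_
      apply mul_le_mul_of_nonneg_right _ (hφ0 _ _ _)
      apply inv_anti₀ (by positivity)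
      exact pow_le_pow_right₀ hr.le (by omega)
    have he : Tendsto (fun n : ℕ => (r^n)⁻¹ * φ 0 0 (((r:ℂ)^n) • c)) atTop (nhds 0) := by
      have h := (hsum 0 0 c).tendsto_atTop_zero
      simpa only [smul_zero] using h
    have h0 := squeeze_lim hx hb he
    have := sub_eq_zero.mp h0
    rw [this, hT]
  refine ⟨D, ⟨⟨hadd, hsmul, hder⟩, hbound, fun a => hD a⟩, ?_⟩
  -- uniqueness
  rintro D' ⟨⟨hadd', hsmul', hder'⟩, hbound'⟩
  funext a
  set ψ : ℕ → ℝ := fun k => (r^k)⁻¹ * φ (((r:ℂ)^k) • a) 0 0 with hψ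
  have key : ∀ n : ℕ, ‖D' a - D a‖ ≤ ∑' k : ℕ, ψ (k + (n+1)) := by
    intro n
    have h1 := hbound (((r:ℂ)^n) • a)
    have h2 := hbound' (((r:ℂ)^n) • a)
    have hrpow : ((r:ℂ)^n) ≠ 0 := pow_ne_zero _ hrne
    have e : D' a - D a = ((r:ℂ)^n)⁻¹ • (D' (((r:ℂ)^n) • a) - D (((r:ℂ)^n) • a)) := by
      rw [hsmul' _ _, hsmul _ _]
      match_scalars <;> field_simp
    rw [e]
    refine le_trans (le_of_eq (subNormSmul 𝒜 (((r:ℂ)^n)⁻¹)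
      (D' (((r:ℂ)^n) • a) - D (((r:ℂ)^n) • a)))) ?_
    rw [hnorm]
    have h3 : ‖D' (((r:ℂ)^n) • a) - D (((r:ℂ)^n) • a)‖
        ≤ ∑' k : ℕ, (r ^ (k + 1))⁻¹ * φ (((r : ℂ) ^ (k + 1)) • (((r:ℂ)^n) • a)) 0 0 := by
      have e2 : D' (((r:ℂ)^n) • a) - D (((r:ℂ)^n) • a)
          = (f (((r:ℂ)^n) • a) - D (((r:ℂ)^n) • a))
            - (f (((r:ℂ)^n) • a) - D' (((r:ℂ)^n) • a)) := by abel
      rw [e2]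
      refine le_trans (norm_sub_le _ _) ?_
      calc ‖f (((r:ℂ)^n) • a) - D (((r:ℂ)^n) • a)‖ + ‖f (((r:ℂ)^n) • a) - D' (((r:ℂ)^n) • a)‖
          ≤ (1/2) * ∑' k : ℕ, (r ^ (k + 1))⁻¹ * φ (((r : ℂ) ^ (k + 1)) • (((r:ℂ)^n) • a)) 0 0
            + (1/2) * ∑' k : ℕ, (r ^ (k + 1))⁻¹ * φ (((r : ℂ) ^ (k + 1)) • (((r:ℂ)^n) • a)) 0 0 :=
            add_le_add h1 h2
        _ = ∑' k : ℕ, (r ^ (k + 1))⁻¹ * φ (((r : ℂ) ^ (k + 1)) • (((r:ℂ)^n) • a)) 0 0 := by ring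
    refine le_trans (mul_le_mul_of_nonneg_left h3 (by positivity)) ?_
    rw [← tsum_mul_left]
    apply le_of_eq
    apply tsum_congr
    intro k
    have harg : ((r:ℂ)^(k+1)) • (((r:ℂ)^n) • a) = ((r:ℂ)^(k+(n+1))) • a := by
      rw [smul_smul, ← pow_add, show (k+1)+n = k+(n+1) from by omega]
    rw [harg, hψ, ← mul_assoc, ← mul_inv, ← pow_add, show n+(k+1) = k+(n+1) from by omega]
  have htail : Tendsto (fun n : ℕ => ∑' k : ℕ, ψ (k + (n+1))) atTop (nhds 0) :=
    (tendsto_sum_nat_add ψ).comp (tendsto_add_atTop_nat 1)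
  have hle : ‖D' a - D a‖ ≤ 0 := ge_of_tendsto' htail key
  have := norm_le_zero_iff.mp hle
  exact sub_eq_zero.mp this
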